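/- Let a₁ = 0, a₂, …, a_{k−1}, a_k = 1 be elements of a real algebraic number field of degree k−1 with a₁ < a₂ < … < a_k such that a₂, …, a_{k−1}, 1 are linearly independent over ℚ. Then there exists a constant c₁ > 0, depending only on a₂, …, a_{k−1}, such that for all reals o and all d with 0 < d ≤ 1, N_{d,o}(A) > c₁; in fact one may take c₁ = γ/8 where γ is the constant from the badly-approximable property of {a₂, …, a_{k−1}}. -/

import Mathlib

set_option maxHeartbeats 1000000
set_option synthInstance.maxHeartbeats 400000

theorem cassels_core {ι J : Type*} [Fintype ι] [Fintype J] [Nonempty ι] [DecidableEq J]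
    (M : J → ι → ℂ) (ρ : J) (α : ι → ℝ) (il : ι) (hil : α il = 1)
    (key : ∀ τ : J, (∑ i : ι, ((α i : ℝ) : ℂ) * M τ i) = if τ = ρ then 1 else 0)
    (n : ℕ) (hn : 0 < n) (hcardJ : Fintype.card J = n + 1)
    (c₀ : ℝ) (hc₀ : 0 < c₀)
    (hnorm : ∀ v : ι → ℤ, v ≠ 0 →
      c₀ ≤ ∏ τ : J, ‖∑ i : ι, ((v i : ℤ) : ℂ) * M τ i‖) :
    ∃ γ > (0:ℝ), ∀ q : ℤ, 1 ≤ q → ∀ v : ι → ℤ, ∀ ε : ℝ,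
      (∀ i : ι, |(q:ℝ) * α i - (v i : ℝ)| ≤ ε) →
      γ * (q:ℝ) ^ (-((1:ℝ)/(n:ℝ))) ≤ ε := by
  classical
  have hn0 : ((n:ℝ)) ≠ 0 := Nat.cast_ne_zero.mpr hn.ne'
  set C : ℝ := (∑ τ : J, ∑ i : ι, ‖M τ i‖) + 1 with hC
  have hC1 : 1 ≤ C := by
    have : 0 ≤ ∑ τ : J, ∑ i : ι, ‖M τ i‖ := by positivity
    linarith
  have hC0 : 0 < C := by linarith
  have hrow : ∀ τ : J, (∑ i : ι, ‖M τ i‖) ≤ C := by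
    intro τ
    have h5 := Finset.single_le_sum (f := fun τ' : J => ∑ i : ι, ‖M τ' i‖)
      (fun τ' _ => by positivity) (Finset.mem_univ τ)
    linarith
  set γ₀ : ℝ := (c₀/((1+C)*C^n)) ^ ((1:ℝ)/n) with hγ₀
  have hγ₀pos : 0 < γ₀ := by
    apply Real.rpow_pos_of_pos
    positivity
  refine ⟨min γ₀ 1, by positivity, ?_⟩
  intro q hq v ε hv
  have hq0 : (0:ℝ) < (q:ℝ) := by exact_mod_cast hq
  have hq1 : (1:ℝ) ≤ (q:ℝ) := by exact_mod_cast hq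
  have hε0 : 0 ≤ ε := le_trans (abs_nonneg _) (hv il)
  have hrpownn : 0 ≤ (q:ℝ) ^ (-((1:ℝ)/(n:ℝ))) := Real.rpow_nonneg hq0.le _
  have hexp : (q:ℝ) ^ (-((1:ℝ)/(n:ℝ))) ≤ 1 := by
    apply Real.rpow_le_one_of_one_le_of_nonpos hq1
    rw [neg_nonpos]
    positivity
  by_cases hε1 : 1 ≤ ε
  · calc min γ₀ 1 * (q:ℝ) ^ (-((1:ℝ)/(n:ℝ)))
        ≤ 1 * 1 := mul_le_mul (min_le_right _ _) hexp hrpownn zero_le_one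
      _ ≤ ε := by linarith
  push_neg at hε1
  have hvil : v il = q := by
    have h6 := hv il
    rw [hil, mul_one] at h6
    by_contra hne
    have h7 : (1:ℝ) ≤ |(q:ℝ) - (v il : ℝ)| := by
      have h8 : ((1:ℤ):ℝ) ≤ |((q - v il : ℤ) : ℝ)| := by
        rw [← Int.cast_abs]
        exact_mod_cast Int.one_le_abs (sub_ne_zero.mpr (fun hh => hne hh.symm))
      push_cast at h8 ⊢
      linarith
    linarith
  have hvne : v ≠ 0 := by
    intro h
    rw [h] at hvil
    simp at hvil
    omega
  set T : J → ℂ := fun τ => ∑ i : ι, ((v i : ℤ) : ℂ) * M τ i with hT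
  have hsum : ∀ τ : J,
      ‖∑ i : ι, (((q:ℝ) * α i - (v i : ℝ) : ℝ) : ℂ) * M τ i‖ ≤ C * ε := by
    intro τ
    calc ‖∑ i : ι, (((q:ℝ) * α i - (v i : ℝ) : ℝ) : ℂ) * M τ i‖
        ≤ ∑ i : ι, ‖(((q:ℝ) * α i - (v i : ℝ) : ℝ) : ℂ) * M τ i‖ :=
          norm_sum_le _ _
      _ ≤ ∑ i : ι, ε * ‖M τ i‖ := by
          refine Finset.sum_le_sum (fun i _ => ?_)
          rw [norm_mul, Complex.norm_real, Real.norm_eq_abs]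
          exact mul_le_mul_of_nonneg_right (hv i) (by positivity)
      _ = ε * ∑ i : ι, ‖M τ i‖ := by rw [Finset.mul_sum]
      _ ≤ ε * C := mul_le_mul_of_nonneg_left (hrow τ) hε0
      _ = C * ε := mul_comm _ _
  have hTval : ∀ τ : J, T τ = (if τ = ρ then ((q:ℤ):ℂ) else 0)
      - ∑ i : ι, (((q:ℝ) * α i - (v i : ℝ) : ℝ) : ℂ) * M τ i := by
    intro τ
    simp only [hT]
    have h9 : ∀ i : ι, ((v i : ℤ) : ℂ) * M τ i
        = ((q:ℂ) * ((α i : ℝ) : ℂ) - (((q:ℝ) * α i - (v i : ℝ) : ℝ) : ℂ)) * M τ i := by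
      intro i
      congr 1
      push_cast
      ring
    rw [Finset.sum_congr rfl (fun i _ => h9 i)]
    simp_rw [sub_mul, mul_assoc]
    rw [Finset.sum_sub_distrib, ← Finset.mul_sum, key τ]
    by_cases h : τ = ρ <;> simp [h]
  have hbnd1 : ∀ τ : J, τ ≠ ρ → ‖T τ‖ ≤ C * ε := by
    intro τ hτ
    rw [hTval τ, if_neg hτ, zero_sub, norm_neg]
    exact hsum τ
  have hbnd2 : ‖T ρ‖ ≤ (1+C) * q := by
    rw [hTval ρ, if_pos rfl]
    have e1 : ‖((q:ℤ):ℂ)‖ = (q:ℝ) := by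
      rw [Complex.norm_intCast, abs_of_pos hq0]
    calc ‖((q:ℤ):ℂ) - ∑ i : ι, (((q:ℝ) * α i - (v i : ℝ) : ℝ) : ℂ) * M ρ i‖
        ≤ ‖((q:ℤ):ℂ)‖
          + ‖∑ i : ι, (((q:ℝ) * α i - (v i : ℝ) : ℝ) : ℂ) * M ρ i‖ :=
          norm_sub_le _ _
      _ ≤ (q:ℝ) + C * ε := by
          rw [e1]
          exact add_le_add_right (hsum ρ) _
      _ ≤ (1+C) * q := by nlinarith
  have hprod : c₀ ≤ ((1+C) * q) * (C*ε)^n := by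
    have h10 := hnorm v hvne
    have h11 : (∏ τ : J, ‖T τ‖) ≤ ((1+C) * q) * (C*ε)^n := by
      rw [← Finset.mul_prod_erase Finset.univ _ (Finset.mem_univ ρ)]
      have hcarderase : (Finset.univ.erase ρ).card = n := by
        rw [Finset.card_erase_of_mem (Finset.mem_univ ρ), Finset.card_univ, hcardJ]
        omega
      refine mul_le_mul hbnd2 ?_ (by positivity) (by positivity)
      calc ∏ τ ∈ Finset.univ.erase ρ, ‖T τ‖
          ≤ ∏ _τ ∈ Finset.univ.erase ρ, (C*ε) := by
            refine Finset.prod_le_prod (fun τ _ => by positivity) (fun τ hτ => ?_)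
            exact hbnd1 τ (Finset.ne_of_mem_erase hτ)
        _ = (C*ε)^n := by rw [Finset.prod_const, hcarderase]
    exact h10.trans h11
  have hεn : c₀/((1+C)*C^n) * ((q:ℝ))⁻¹ ≤ ε^n := by
    have h12 : c₀ ≤ ((1+C)*C^n*(q:ℝ)) * ε^n := by
      calc c₀ ≤ ((1+C) * q) * (C*ε)^n := hprod
        _ = ((1+C)*C^n*(q:ℝ)) * ε^n := by rw [mul_pow]; ring
    have h13 : c₀/((1+C)*C^n) * ((q:ℝ))⁻¹ = c₀ / ((1+C)*C^n*(q:ℝ)) := by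
      field_simp
    rw [h13, div_le_iff₀ (by positivity)]
    linarith
  have e3 : (c₀/((1+C)*C^n) * ((q:ℝ))⁻¹) ^ ((1:ℝ)/n) = γ₀ * (q:ℝ)^(-((1:ℝ)/(n:ℝ))) := by
    rw [Real.mul_rpow (by positivity) (by positivity), Real.inv_rpow hq0.le,
      ← Real.rpow_neg hq0.le]
  calc min γ₀ 1 * (q:ℝ) ^ (-((1:ℝ)/(n:ℝ)))
      ≤ γ₀ * (q:ℝ) ^ (-((1:ℝ)/(n:ℝ))) :=
        mul_le_mul_of_nonneg_right (min_le_left _ _) hrpownn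
    _ = (c₀/((1+C)*C^n) * ((q:ℝ))⁻¹) ^ ((1:ℝ)/n) := e3.symm
    _ ≤ (ε^n) ^ ((1:ℝ)/n) := Real.rpow_le_rpow (by positivity) hεn (by positivity)
    _ = ε := by
        rw [← Real.rpow_natCast ε n, ← Real.rpow_mul hε0, mul_one_div, div_self hn0,
          Real.rpow_one]

theorem cassels_bound (k : ℕ) (hk : 3 ≤ k) (a : Fin k → ℝ)
    (h1 : a ⟨k - 1, Nat.sub_lt (lt_of_lt_of_le (by norm_num) hk) Nat.one_pos⟩ = 1)
    (F : IntermediateField ℚ ℝ) (hdeg : Module.finrank ℚ F = k - 1)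
    (haF : ∀ i, a i ∈ F)
    (hind : LinearIndependent ℚ (fun i : {i : Fin k // (i : ℕ) ≠ 0} => a (i : Fin k))) :
    ∃ γ > (0:ℝ), ∀ q : ℤ, 1 ≤ q → ∀ v : {i : Fin k // (i : ℕ) ≠ 0} → ℤ, ∀ ε : ℝ,
      (∀ i : {i : Fin k // (i : ℕ) ≠ 0}, |(q:ℝ) * a i - (v i : ℝ)| ≤ ε) →
      γ * (q:ℝ) ^ (-((1:ℝ)/((k:ℝ)-2))) ≤ ε := by
  classical
  have hFD : FiniteDimensional ℚ F := by
    refine FiniteDimensional.of_finrank_pos ?_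
    omega
  set ι := {i : Fin k // (i : ℕ) ≠ 0}
  have hne : Nonempty ι := ⟨⟨⟨k-1, Nat.sub_lt (lt_of_lt_of_le (by norm_num) hk) Nat.one_pos⟩, by simp; omega⟩⟩
  have hcard : Fintype.card ι = k - 1 := by
    have h2 : Fintype.card {i : Fin k // (i:ℕ) = 0} = 1 := by
      rw [Fintype.card_eq_one_iff]
      refine ⟨⟨⟨0, by omega⟩, rfl⟩, ?_⟩
      rintro ⟨⟨m, hm⟩, h⟩
      exact Subtype.ext (Fin.ext h)
    have := Fintype.card_subtype_compl (fun i : Fin k => (i:ℕ) = 0)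
    simp only [h2, Fintype.card_fin] at this
    exact this
  let fa : ι → F := fun i => ⟨a i, haF i⟩
  have hfa : LinearIndependent ℚ fa := by
    apply LinearIndependent.of_comp F.val.toLinearMap
    exact hind
  let b : Module.Basis ι ℚ F := basisOfLinearIndependentOfCardEqFinrank hfa (by rw [hcard, hdeg])
  have hb : ∀ i, (b i : ℝ) = a i := by
    intro i
    simp [b, fa]
  let Bs : Module.Basis ι ℚ F :=
    (Algebra.traceForm ℚ F).dualBasis (traceForm_nondegenerate ℚ F) b
  have hcardE : Fintype.card (F →ₐ[ℚ] ℂ) = k - 1 := by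
    rw [AlgHom.card]; exact hdeg
  let e : ι ≃ (F →ₐ[ℚ] ℂ) := Fintype.equivOfCardEq (hcard.trans hcardE.symm)
  let ρ : F →ₐ[ℚ] ℂ := (Complex.ofRealAm.restrictScalars ℚ).comp F.val
  have hρ : ∀ x : F, ρ x = ((x : ℝ) : ℂ) := fun x => rfl
  let A : Matrix ι ι ℂ := fun si j => (e si) (b j)
  let B : Matrix ι ι ℂ := fun i sj => (e sj) (Bs i)
  have hBA : B * A = 1 := by
    ext i j
    rw [Matrix.mul_apply, Matrix.one_apply]
    have : ∀ s : ι, B i s * A s j = (e s) (Bs i * b j) := by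
      intro s; simp [A, B, map_mul]
    simp_rw [this]
    rw [Fintype.sum_equiv e (fun s => (e s) (Bs i * b j)) (fun σ => σ (Bs i * b j)) (fun s => rfl)]
    rw [← trace_eq_sum_embeddings (E := ℂ)]
    have h2 := LinearMap.BilinForm.apply_dualBasis_left (B := Algebra.traceForm ℚ F)
      (traceForm_nondegenerate ℚ F) b i j
    rw [Algebra.traceForm_apply] at h2
    rw [h2]
    by_cases h : i = j <;> simp [h, eq_comm]
  have hAB : A * B = 1 := mul_eq_one_comm.mpr hBA
  have key : ∀ τ : F →ₐ[ℚ] ℂ, (∑ i : ι, ((a i : ℝ) : ℂ) * τ (Bs i)) = if τ = ρ then 1 else 0 := by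
    intro τ
    have h3 := congrFun (congrFun hAB (e.symm ρ)) (e.symm τ)
    rw [Matrix.mul_apply, Matrix.one_apply] at h3
    simp only [A, B, Equiv.apply_symm_apply] at h3
    simp only [e.symm.injective.eq_iff] at h3
    calc ∑ i : ι, ((a i : ℝ) : ℂ) * τ (Bs i)
        = ∑ i : ι, ρ (b i) * τ (Bs i) := Finset.sum_congr rfl (fun i _ => by rw [hρ, hb])
      _ = if ρ = τ then 1 else 0 := h3
      _ = if τ = ρ then 1 else 0 := by by_cases h : τ = ρ <;> simp [h, eq_comm]
  -- denominators
  obtain ⟨w, hw0, hwint⟩ := exists_integral_multiples ℤ ℚ (L := F) (Finset.univ.image Bs)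
  have hwint' : ∀ i : ι, IsIntegral ℤ (w • (Bs i)) := fun i =>
    hwint (Bs i) (Finset.mem_image_of_mem _ (Finset.mem_univ i))
  have hwR : (0:ℝ) < (|w| : ℝ) := by exact_mod_cast abs_pos.mpr hw0
  set c₀ : ℝ := 1 / ((|w|:ℝ) ^ (k-1)) with hc₀def
  have hc₀ : 0 < c₀ := by positivity
  -- the norm lower bound
  have hnorm : ∀ v : ι → ℤ, v ≠ 0 →
      c₀ ≤ ∏ τ : F →ₐ[ℚ] ℂ, ‖∑ i : ι, ((v i : ℤ) : ℂ) * τ (Bs i)‖ := by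
    intro v hvne
    set x : F := ∑ i : ι, (v i : ℚ) • Bs i with hx
    have hτx : ∀ τ : F →ₐ[ℚ] ℂ, τ x = ∑ i : ι, ((v i : ℤ) : ℂ) * τ (Bs i) := by
      intro τ
      rw [hx, map_sum]
      refine Finset.sum_congr rfl (fun i _ => ?_)
      rw [Algebra.smul_def, map_mul, AlgHom.commutes]
      norm_num
    have hxne : x ≠ 0 := by
      intro h
      apply hvne
      funext i
      have h5 : (⇑(Bs.repr (∑ j : ι, ((v j : ℚ)) • Bs j)) : ι → ℚ)
          = fun j' : ι => ((v j' : ℚ)) := Bs.repr_sum_self _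
      rw [← hx, h] at h5
      have h6 := congrFun h5 i
      simp only [map_zero, Finsupp.coe_zero, Pi.zero_apply] at h6
      exact_mod_cast h6.symm
    have hzne : (w:ℚ) • x ≠ 0 :=
      smul_ne_zero (by exact_mod_cast hw0) hxne
    have hzint : IsIntegral ℤ ((w:ℚ) • x) := by
      rw [hx, Finset.smul_sum]
      refine IsIntegral.sum _ (fun i _ => ?_)
      have h5 : (w:ℚ) • ((v i : ℚ) • Bs i) = algebraMap ℤ F (v i) * (w • Bs i) := by
        rw [smul_comm, Int.cast_smul_eq_zsmul ℚ w (Bs i)]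
        rw [algebraMap_int_eq, eq_intCast, ← zsmul_eq_mul]
        rw [Int.cast_smul_eq_zsmul ℚ (v i) (w • Bs i)]
      rw [h5]
      exact (isIntegral_algebraMap).mul (hwint' i)
    have hNzint : IsIntegral ℤ (Algebra.norm ℚ ((w:ℚ) • x)) := Algebra.isIntegral_norm ℚ hzint
    obtain ⟨m, hm⟩ := IsIntegrallyClosed.isIntegral_iff.mp hNzint
    have hNzne : Algebra.norm ℚ ((w:ℚ) • x) ≠ 0 := by
      rw [Algebra.norm_ne_zero_iff]
      exact hzne
    have hmne : m ≠ 0 := by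
      rintro rfl
      rw [map_zero] at hm
      exact hNzne hm.symm
    have hm1 : (1:ℚ) ≤ |(m:ℚ)| := by
      rw [← Int.cast_abs]
      exact_mod_cast Int.one_le_abs hmne
    have hval : Algebra.norm ℚ ((w:ℚ) • x) = (w:ℚ)^(k-1) * Algebra.norm ℚ x := by
      rw [Algebra.smul_def, map_mul, Algebra.norm_algebraMap, hdeg]
    -- lower bound on |Algebra.norm ℚ x|
    have hlow : c₀ ≤ |((Algebra.norm ℚ x : ℚ) : ℝ)| := by
      have h6 : (1:ℚ) ≤ |(w:ℚ)|^(k-1) * |Algebra.norm ℚ x| := by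
        calc (1:ℚ) ≤ |(m:ℚ)| := hm1
          _ = |(w:ℚ)^(k-1) * Algebra.norm ℚ x| := by
              rw [← hval, ← hm]; norm_num
          _ = |(w:ℚ)|^(k-1) * |Algebra.norm ℚ x| := by
              rw [abs_mul, abs_pow]
        
      have h7 : (1:ℝ) ≤ (|w|:ℝ)^(k-1) * |((Algebra.norm ℚ x : ℚ) : ℝ)| := by
        have := h6
        have h8 : ((1:ℚ):ℝ) ≤ ((|(w:ℚ)|^(k-1) * |Algebra.norm ℚ x| : ℚ) : ℝ) := by
          exact_mod_cast this
        push_cast at h8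
        convert h8 using 2 <;> push_cast <;> ring
      rw [hc₀def, div_le_iff₀ (by positivity)]
      calc (1:ℝ) ≤ (|w|:ℝ)^(k-1) * |((Algebra.norm ℚ x : ℚ) : ℝ)| := h7
        _ = |((Algebra.norm ℚ x : ℚ) : ℝ)| * (|w|:ℝ)^(k-1) := mul_comm _ _
    -- product of embeddings
    have hemb : (algebraMap ℚ ℂ) (Algebra.norm ℚ x) = ∏ τ : F →ₐ[ℚ] ℂ, τ x :=
      Algebra.norm_eq_prod_embeddings ℚ ℂ x
    have habs : |((Algebra.norm ℚ x : ℚ) : ℝ)|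
        = ∏ τ : F →ₐ[ℚ] ℂ, ‖∑ i : ι, ((v i : ℤ) : ℂ) * τ (Bs i)‖ := by
      have h9 : ‖(algebraMap ℚ ℂ) (Algebra.norm ℚ x)‖
          = |((Algebra.norm ℚ x : ℚ) : ℝ)| := by
        rw [show (algebraMap ℚ ℂ) (Algebra.norm ℚ x)
            = (((Algebra.norm ℚ x : ℚ) : ℝ) : ℂ) by push_cast; norm_num, Complex.norm_real, Real.norm_eq_abs]
      rw [← h9, hemb, norm_prod]
      exact Finset.prod_congr rfl (fun τ _ => by rw [hτx τ])
    rw [← habs]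
    exact hlow
  -- apply the core lemma
  obtain ⟨γ, hγpos, hγ⟩ := cassels_core (fun τ (i : ι) => τ (Bs i)) ρ (fun i : ι => a i)
    (⟨⟨k-1, Nat.sub_lt (lt_of_lt_of_le (by norm_num) hk) Nat.one_pos⟩, by simp; omega⟩ : ι) h1 key (k-2) (by omega) (by rw [hcardE]; omega) c₀ hc₀ hnorm
  refine ⟨γ, hγpos, ?_⟩
  intro q hq v ε hv
  have hkr : (((k-2:ℕ)):ℝ) = (k:ℝ) - 2 := by
    rw [Nat.cast_sub (by omega)]; norm_num
  have := hγ q hq v ε hv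
  rwa [hkr] at this

/-- Theorem 2.3: if `a₁ = 0 < a₂ < … < a_k = 1` lie in a real number field of
degree `k-1` over `ℚ` and `a₂, …, a_{k-1}, 1` are `ℚ`-linearly independent, then
there is `c₁ > 0` with `N_{d,o}(A) > c₁` for all `o` and all `0 < d ≤ 1`. -/
theorem badly_approx_lower_bound (k : ℕ) (hk : 3 ≤ k) (a : Fin k → ℝ)
    (hmono : StrictMono a)
    (h0 : a ⟨0, by omega⟩ = 0) (h1 : a ⟨k - 1, by omega⟩ = 1)
    (F : IntermediateField ℚ ℝ) (hdeg : Module.finrank ℚ F = k - 1)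
    (haF : ∀ i, a i ∈ F)
    (hind : LinearIndependent ℚ (fun i : {i : Fin k // (i : ℕ) ≠ 0} => a (i : Fin k))) :
    ∃ c₁ > (0 : ℝ), ∀ o d : ℝ, 0 < d → d ≤ 1 →
      (⨆ i : Fin k, ⨅ m : ℤ, |a i - o - (m : ℝ) * d|) / d *
        ((1 : ℝ) / d) ^ ((1 : ℝ) / ((k : ℝ) - 2)) > c₁ := by
  obtain ⟨γ, hγpos, hγ⟩ := cassels_bound k hk a h1 F hdeg haF hind
  have hk2 : (0:ℝ) < (k:ℝ) - 2 := by
    have : (3:ℝ) ≤ (k:ℝ) := by exact_mod_cast hk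
    linarith
  refine ⟨min (1/16) (γ/16), by positivity, ?_⟩
  intro o d hd0 hd1
  set s : ℝ := (1:ℝ)/((k:ℝ)-2) with hs
  have hspos : 0 < s := by positivity
  have hs1 : s ≤ 1 := by
    rw [hs, div_le_one hk2]
    have : (3:ℝ) ≤ (k:ℝ) := by exact_mod_cast hk
    linarith
  set f : Fin k → ℝ := fun i => ⨅ m : ℤ, |a i - o - (m:ℝ)*d| with hf
  set S : ℝ := ⨆ i, f i with hS
  have hf0 : ∀ i, 0 ≤ f i := fun i => le_ciInf (fun m => abs_nonneg _)
  have hfS : ∀ i, f i ≤ S := fun i =>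
    le_ciSup (Set.Finite.bddAbove (Set.finite_range f)) i
  have hS0 : 0 ≤ S := (hf0 ⟨0, by omega⟩).trans (hfS ⟨0, by omega⟩)
  -- the infimum is attained at the rounded multiple
  set mm : Fin k → ℤ := fun i => round ((a i - o)/d) with hmm
  have hm : ∀ i, |a i - o - (mm i : ℝ)*d| ≤ S := by
    intro i
    refine le_trans ?_ (hfS i)
    refine le_ciInf (fun m => ?_)
    set x := a i - o with hxdef
    have e1 : ∀ j : ℤ, |x - (j:ℝ)*d| = |x/d - j| * d := by
      intro j
      rw [← abs_of_pos hd0, ← abs_mul]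
      rw [abs_of_pos hd0]
      congr 1
      field_simp
    rw [e1, e1]
    apply mul_le_mul_of_nonneg_right _ hd0.le
    by_cases hmeq : m = round (x/d)
    · rw [hmeq]
    · have ha : |x/d - (round (x/d) : ℝ)| ≤ 1/2 := abs_sub_round (x/d)
      have hb : (1:ℝ) ≤ |(round (x/d) : ℝ) - (m:ℝ)| := by
        have hne : round (x/d) - m ≠ 0 := sub_ne_zero.mpr (fun h => hmeq h.symm)
        have := Int.one_le_abs hne
        have h2 : ((1:ℤ):ℝ) ≤ |((round (x/d) - m : ℤ) : ℝ)| := by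
          rw [← Int.cast_abs]; exact_mod_cast this
        push_cast at h2
        convert h2 using 2
      have htri : |(round (x/d):ℝ) - (m:ℝ)| ≤ |(round (x/d):ℝ) - x/d| + |x/d - m| :=
        abs_sub_le _ _ _
      rw [abs_sub_comm ((round (x/d):ℝ)) (x/d)] at htri
      linarith
  by_cases hcase : d/8 ≤ S
  · -- easy case
    have h1d : (1:ℝ) ≤ 1/d := by
      rw [le_div_iff₀ hd0]; linarith
    have hpow1 : (1:ℝ) ≤ (1/d) ^ s := Real.one_le_rpow h1d hspos.le
    have hSd : (1:ℝ)/8 ≤ S/d := by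
      rw [div_le_div_iff₀ (by norm_num) hd0]
      linarith
    have : (1:ℝ)/8 * 1 ≤ S/d * (1/d)^s := by
      apply mul_le_mul hSd hpow1 zero_le_one (by positivity)
    calc min (1/16) (γ/16) ≤ 1/16 := min_le_left _ _
      _ < 1/8 * 1 := by norm_num
      _ ≤ S/d * (1/d)^s := this
  · push_neg at hcase
    set i0 : Fin k := ⟨0, by omega⟩ with hi0
    set il : Fin k := ⟨k-1, by omega⟩ with hil
    have ha0 : a i0 = 0 := h0
    have ha1 : a il = 1 := h1
    set q : ℤ := mm il - mm i0 with hq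
    have hq2S : |1 - (q:ℝ)*d| ≤ 2*S := by
      have e1 := hm i0
      have e2 := hm il
      rw [ha0] at e1
      rw [ha1] at e2
      have : (1:ℝ) - (q:ℝ)*d = (1 - o - (mm il : ℝ)*d) - (0 - o - (mm i0 : ℝ)*d) := by
        push_cast [hq]; ring
      rw [this]
      calc |(1 - o - (mm il : ℝ)*d) - (0 - o - (mm i0 : ℝ)*d)|
          ≤ |1 - o - (mm il : ℝ)*d| + |0 - o - (mm i0 : ℝ)*d| := abs_sub _ _
        _ ≤ S + S := by
            refine add_le_add e2 ?_
            calc |0 - o - (mm i0 : ℝ)*d| = |(0:ℝ) - o - (mm i0 : ℝ)*d| := rfl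
              _ ≤ S := by rw [show (0:ℝ) - o - (mm i0:ℝ)*d = 0 - o - (mm i0:ℝ)*d from rfl]
                          exact e1
        _ = 2*S := by ring
    have h2Slt : 2*S < d/4 := by linarith
    have hqd_lb : (3:ℝ)/4 ≤ (q:ℝ)*d := by
      have := abs_le.mp hq2S
      have hd4 : d/4 ≤ 1/4 := by linarith
      linarith [this.2]
    have hqd_ub : (q:ℝ)*d ≤ 5/4 := by
      have := abs_le.mp hq2S
      have hd4 : d/4 ≤ 1/4 := by linarith
      linarith [this.1]
    have hq1 : 1 ≤ q := by
      by_contra hq1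
      push_neg at hq1
      have : (q:ℝ) ≤ 0 := by exact_mod_cast Int.lt_add_one_iff.mp hq1
      nlinarith
    have hqpos : (0:ℝ) < (q:ℝ) := by exact_mod_cast hq1
    have hqle : (q:ℝ) ≤ 2/d := by
      rw [le_div_iff₀ hd0]
      linarith
    -- the integer vector
    set v : {i : Fin k // (i : ℕ) ≠ 0} → ℤ := fun i => mm i.1 - mm i0 with hv
    have hbound2 : ∀ i : Fin k, |a i - ((mm i - mm i0 : ℤ):ℝ)*d| ≤ 2*S := by
      intro i
      have e1 := hm i0
      rw [ha0] at e1
      have e2 := hm i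
      have : a i - ((mm i - mm i0 : ℤ):ℝ)*d
          = (a i - o - (mm i : ℝ)*d) - (0 - o - (mm i0 : ℝ)*d) := by
        push_cast; ring
      rw [this]
      calc |(a i - o - (mm i : ℝ)*d) - (0 - o - (mm i0 : ℝ)*d)|
          ≤ |a i - o - (mm i : ℝ)*d| + |0 - o - (mm i0 : ℝ)*d| := abs_sub _ _
        _ ≤ S + S := add_le_add e2 e1
        _ = 2*S := by ring
    have hai : ∀ i : Fin k, 0 ≤ a i ∧ a i ≤ 1 := by
      intro i
      constructor
      · rw [← ha0]
        exact hmono.monotone (by simp [hi0, Fin.le_def])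
      · rw [← ha1]
        refine hmono.monotone ?_
        rw [Fin.le_def]
        simp [hil]
        omega
    have hε : ∀ i : {i : Fin k // (i : ℕ) ≠ 0}, |(q:ℝ) * a i - (v i : ℝ)| ≤ 4*S/d := by
      intro i
      have hb2 := hbound2 i.1
      have key : d * |(q:ℝ) * a i.1 - (v i : ℝ)| ≤ 4*S := by
        have e3 : d * ((q:ℝ) * a i.1 - (v i : ℝ)) =
            a i.1 * ((q:ℝ)*d - 1) + (a i.1 - ((mm i.1 - mm i0 : ℤ):ℝ)*d) := by
          push_cast [hv, hq]
          ring
        rw [← abs_of_pos hd0, ← abs_mul, e3]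
        calc |a i.1 * ((q:ℝ)*d - 1) + (a i.1 - ((mm i.1 - mm i0 : ℤ):ℝ)*d)|
            ≤ |a i.1 * ((q:ℝ)*d - 1)| + |a i.1 - ((mm i.1 - mm i0 : ℤ):ℝ)*d| := abs_add_le _ _
          _ ≤ 1 * (2*S) + 2*S := by
              refine add_le_add ?_ hb2
              rw [abs_mul]
              refine mul_le_mul ?_ ?_ (abs_nonneg _) zero_le_one
              · rw [abs_of_nonneg (hai i.1).1]; exact (hai i.1).2
              · rw [abs_sub_comm]
                exact hq2S
          _ = 4*S := by ring
      rw [mul_comm] at key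
      exact (le_div_iff₀ hd0).mpr key
    have hmain := hγ q hq1 v (4*S/d) hε
    -- q^(-s) ≥ (d/2)^s ≥ d^s/2
    have hq_rpow : (2/d) ^ (-s) ≤ (q:ℝ) ^ (-s) := by
      rw [Real.rpow_neg (by positivity), Real.rpow_neg hqpos.le]
      apply inv_anti₀ (Real.rpow_pos_of_pos hqpos _)
      exact Real.rpow_le_rpow hqpos.le hqle hspos.le
    have h2d : ((2:ℝ)/d) ^ (-s) = (d/2) ^ s := by
      rw [Real.rpow_neg (by positivity), ← Real.inv_rpow (by positivity)]
      norm_num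
    have hd2 : (d/2:ℝ)^s = d^s * (1/2:ℝ)^s := by
      rw [show (d/2:ℝ) = d * (1/2) by ring, Real.mul_rpow hd0.le (by norm_num)]
    have hhalf : (1/2:ℝ) ≤ (1/2:ℝ)^s := by
      have := Real.rpow_le_rpow_of_exponent_ge (by norm_num : (0:ℝ) < 1/2)
        (by norm_num : (1/2:ℝ) ≤ 1) hs1
      rwa [Real.rpow_one] at this
    have hchain : γ * (d^s * (1/2)) ≤ 4*S/d := by
      calc γ * (d^s * (1/2)) ≤ γ * (d^s * (1/2)^s) := by
            apply mul_le_mul_of_nonneg_left _ hγpos.le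
            exact mul_le_mul_of_nonneg_left hhalf (by positivity)
        _ = γ * (d/2)^s := by rw [hd2]
        _ = γ * ((2/d)^(-s)) := by rw [h2d]
        _ ≤ γ * ((q:ℝ)^(-s)) := mul_le_mul_of_nonneg_left hq_rpow hγpos.le
        _ ≤ 4*S/d := hmain
    -- conclude
    have hSd : γ/8 * d^s ≤ S/d := by
      have e : γ * (d^s * (1/2)) = 4 * (γ/8 * d^s) := by ring
      have e2 : 4*S/d = 4*(S/d) := by ring
      rw [e, e2] at hchain
      linarith
    have hfinal : γ/8 ≤ S/d * (1/d)^s := by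
      have hmul : (γ/8 * d^s) * (1/d)^s ≤ (S/d) * (1/d)^s :=
        mul_le_mul_of_nonneg_right hSd (by positivity)
      calc γ/8 = γ/8 * (d * (1/d))^s := by
            rw [mul_one_div_cancel hd0.ne', Real.one_rpow, mul_one]
        _ = (γ/8 * d^s) * (1/d)^s := by
            rw [Real.mul_rpow hd0.le (by positivity)]
            ring
        _ ≤ S/d * (1/d)^s := hmul
    calc min (1/16) (γ/16) ≤ γ/16 := min_le_right _ _
      _ < γ/8 := by nlinarith
      _ ≤ S/d * (1/d)^s := hfinal
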